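/- Let M be a finitely generated R-module with Z(M) ∩ S = ∅, and let N be a submodule with (N :_R M) ∩ S = ∅. If S⁻¹N is a weakly primary submodule of S⁻¹M and there exists s ∈ S such that (N :_M t) ⊆ (N :_M s) for all t ∈ S, then N is a weakly S-primary submodule of M. -/

import Mathlib

open Submodule

/-- `N` is a weakly `S`-primary submodule of `M`. -/
def IsWeaklySPrimary {R : Type*} [CommRing R] {M : Type*} [AddCommGroup M] [Module R M]
    (S : Set R) (N : Submodule R M) : Prop :=
  ((N.colon ⊤ : Ideal R) : Set R) ∩ S = ∅ ∧
    ∃ s ∈ S, ∀ (a : R) (m : M), a • m ≠ 0 → a • m ∈ N →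
      s * a ∈ (N.colon ⊤ : Ideal R).radical ∨ s • m ∈ N

/-- `N` is an `S`-primary submodule of `M`. -/
def IsSPrimary {R : Type*} [CommRing R] {M : Type*} [AddCommGroup M] [Module R M]
    (S : Set R) (N : Submodule R M) : Prop :=
  ((N.colon ⊤ : Ideal R) : Set R) ∩ S = ∅ ∧
    ∃ s ∈ S, ∀ (a : R) (m : M), a • m ∈ N →
      s * a ∈ (N.colon ⊤ : Ideal R).radical ∨ s • m ∈ N

/-- `N` is a weakly primary (proper) submodule of `M`. -/
def IsWeaklyPrimary {R : Type*} [CommRing R] {M : Type*} [AddCommGroup M] [Module R M]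
    (N : Submodule R M) : Prop :=
  N ≠ ⊤ ∧ ∀ (a : R) (m : M), a • m ≠ 0 → a • m ∈ N →
      a ∈ (N.colon ⊤ : Ideal R).radical ∨ m ∈ N

/-- `I` is a weakly `S`-primary ideal of `R`. -/
def IsWeaklySPrimaryIdeal {R : Type*} [CommRing R] (S : Set R) (I : Ideal R) : Prop :=
  (I : Set R) ∩ S = ∅ ∧
    ∃ s ∈ S, ∀ a b : R, a * b ≠ 0 → a * b ∈ I → s * a ∈ I.radical ∨ s * b ∈ I

theorem stmt11 {R : Type*} [CommRing R] {M : Type*} [AddCommGroup M] [Module R M]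
    [Module.Finite R M]
    (S : Submonoid R) (N : Submodule R M)
    (hZ : {r : R | ∃ m : M, m ≠ 0 ∧ r • m = 0} ∩ (S : Set R) = ∅)
    (hdisj : ((N.colon ⊤ : Ideal R) : Set R) ∩ (S : Set R) = ∅)
    (hloc : IsWeaklyPrimary (N.localized S))
    (hs : ∃ s ∈ S, ∀ t ∈ S,
      N.comap (LinearMap.lsmul R M t) ≤ N.comap (LinearMap.lsmul R M s)) :
    IsWeaklySPrimary (S : Set R) N := by
  obtain ⟨s, hsS, hsmax⟩ := hs
  refine ⟨hdisj, s, hsS, ?_⟩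
  intro a m hne hmem
  -- injectivity of M → S⁻¹M
  have hinj : ∀ x : M, x ≠ 0 → LocalizedModule.mk x (1 : S) ≠ 0 := by
    intro x hx0 hx
    rw [IsLocalizedModule.mk_eq_mk', IsLocalizedModule.mk'_eq_zero'] at hx
    obtain ⟨t, ht⟩ := hx
    have : (t : R) ∈ {r : R | ∃ m : M, m ≠ 0 ∧ r • m = 0} ∩ (S : Set R) :=
      ⟨⟨x, hx0, ht⟩, t.2⟩
    rw [hZ] at this
    exact this
  -- pulling back membership in the localized submodule
  have pull : ∀ y : M, LocalizedModule.mk y (1 : S) ∈ N.localized S → s • y ∈ N := by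
    intro y hy
    obtain ⟨z, hz, t, hzt⟩ := hy
    rw [← IsLocalizedModule.mk_eq_mk', LocalizedModule.mk_eq] at hzt
    obtain ⟨u, hu⟩ := hzt
    rw [one_smul] at hu
    simp only [Submonoid.smul_def] at hu
    have h1 : ((u * t : S) : R) • y ∈ N := by
      have h2 : (u : R) • z ∈ N := N.smul_mem _ hz
      rw [hu] at h2
      rwa [Submonoid.coe_mul, mul_smul]
    have h3 : y ∈ N.comap (LinearMap.lsmul R M ((u * t : S) : R)) := h1
    exact hsmax _ (u * t).2 h3
  have key := hloc.2 (algebraMap R (Localization S) a) (LocalizedModule.mk m (1 : S)) ?_ ?_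
  · rcases key with hL | hR
    · -- a-side
      obtain ⟨n, hn⟩ := hL
      have hn' : ∀ y : M, (s * a ^ n) • y ∈ N := by
        intro y
        have h4 : (algebraMap R (Localization S) a) ^ n • LocalizedModule.mk y (1 : S)
            ∈ N.localized S := Submodule.mem_colon.mp hn _ (Submodule.mem_top (R := Localization S))
        rw [← map_pow, algebraMap_smul, LocalizedModule.smul'_mk] at h4
        have := pull _ h4
        rwa [mul_smul]
      have hcolon : s * a ^ n ∈ N.colon ⊤ :=
        Submodule.mem_colon.mpr fun p _ => hn' p
      cases n with
      | zero =>
        exfalso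
        rw [pow_zero, mul_one] at hcolon
        have : s ∈ ((N.colon ⊤ : Ideal R) : Set R) ∩ (S : Set R) := ⟨hcolon, hsS⟩
        rw [hdisj] at this
        exact this
      | succ k =>
        left
        refine ⟨k + 1, ?_⟩
        rw [mul_pow]
        have : s ^ (k + 1) * a ^ (k + 1) = s ^ k * (s * a ^ (k + 1)) := by ring
        rw [this]
        exact Ideal.mul_mem_left _ _ hcolon
    · exact Or.inr (pull m hR)
  · rw [algebraMap_smul, LocalizedModule.smul'_mk]
    exact hinj _ hne
  · rw [algebraMap_smul, LocalizedModule.smul'_mk]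
    exact ⟨a • m, hmem, 1, (IsLocalizedModule.mk_eq_mk' _ _).symm⟩
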